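/- Let ψ(x) = log(1 + e^{x₁} + ⋯ + e^{xₙ}) for x ∈ ℝⁿ. Then det ∇²ψ(x) = exp( −(n+1)ψ(x) + Σⱼ₌₁ⁿ xⱼ ). In particular, x ↦ det ∇²ψ(x) is a positive log-concave function on ℝⁿ. -/

import Mathlib

set_option maxHeartbeats 1000000

open Real Set Matrix

namespace DetHessianAux

variable {n : ℕ}

noncomputable def S (x : Fin n → ℝ) : ℝ := 1 + ∑ i, Real.exp (x i)

lemma S_pos (x : Fin n → ℝ) : 0 < S x := by
  have : (0:ℝ) ≤ ∑ i, Real.exp (x i) := Finset.sum_nonneg fun i _ => (Real.exp_pos _).le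
  unfold S; linarith

noncomputable def P (k : Fin n) : (Fin n → ℝ) →L[ℝ] ℝ := ContinuousLinearMap.proj k

lemma P_apply (k : Fin n) (y : Fin n → ℝ) : P k y = y k := rfl

noncomputable def L (x : Fin n → ℝ) : (Fin n → ℝ) →L[ℝ] ℝ :=
  ∑ k, Real.exp (x k) • P k

lemma L_apply_single (x : Fin n → ℝ) (j : Fin n) : L x (Pi.single j 1) = Real.exp (x j) := by
  simp only [L, ContinuousLinearMap.sum_apply, ContinuousLinearMap.smul_apply,
    P_apply, smul_eq_mul, Pi.single_apply]
  simp [Finset.sum_ite_eq']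

lemma hasFDerivAt_S (x : Fin n → ℝ) : HasFDerivAt S (L x) x := by
  have h : ∀ k : Fin n, HasFDerivAt (fun y : Fin n → ℝ => Real.exp (y k))
      (Real.exp (x k) • P k) x := fun k => (P k).hasFDerivAt.exp
  have hsum := HasFDerivAt.fun_sum (fun k (_ : k ∈ Finset.univ) => h k)
  exact hsum.const_add 1

lemma hasFDerivAt_psi (x : Fin n → ℝ) :
    HasFDerivAt (fun y : Fin n → ℝ => Real.log (S y)) ((S x)⁻¹ • L x) x :=
  (hasFDerivAt_S x).log (S_pos x).ne'

lemma contDiff_psi : ContDiff ℝ 2 (fun y : Fin n → ℝ => Real.log (S y)) := by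
  have hS : ContDiff ℝ 2 (S (n := n)) := by
    have : ∀ k : Fin n, ContDiff ℝ 2 (fun y : Fin n → ℝ => Real.exp (y k)) := fun k =>
      Real.contDiff_exp.comp (P k).contDiff
    exact contDiff_const.add (ContDiff.sum fun k _ => this k)
  exact hS.log fun x => (S_pos x).ne'

lemma hessian_entry (x : Fin n → ℝ) (i j : Fin n) :
    iteratedFDeriv ℝ 2 (fun y : Fin n → ℝ => Real.log (S y)) x ![Pi.single i 1, Pi.single j 1]
      = (if i = j then Real.exp (x i) * (S x)⁻¹ else 0)
        - (Real.exp (x i) * (S x)⁻¹) * (Real.exp (x j) * (S x)⁻¹) := by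
  set ψ : (Fin n → ℝ) → ℝ := fun y => Real.log (S y) with hψdef
  have hC1 : ContDiff ℝ 1 (fderiv ℝ ψ) := contDiff_psi.fderiv_right (le_refl _)
  have hF : HasFDerivAt (fderiv ℝ ψ) (fderiv ℝ (fderiv ℝ ψ) x) x :=
    ((hC1.differentiable one_ne_zero) x).hasFDerivAt
  set A : ((Fin n → ℝ) →L[ℝ] ℝ) →L[ℝ] ℝ := ContinuousLinearMap.apply ℝ ℝ (Pi.single j 1) with hAdef
  have hA : HasFDerivAt (⇑A ∘ fderiv ℝ ψ) (A.comp (fderiv ℝ (fderiv ℝ ψ) x)) x :=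
    A.hasFDerivAt.comp x hF
  have hfun : (⇑A ∘ fderiv ℝ ψ)
      = fun y => Real.exp (y j) * (S y)⁻¹ := by
    funext y
    rw [Function.comp_apply, hAdef, ContinuousLinearMap.apply_apply,
      (hasFDerivAt_psi y).fderiv]
    simp [L_apply_single, mul_comm]
  rw [hfun] at hA
  have hinv : ∀ y : Fin n → ℝ, HasFDerivAt (fun z : Fin n → ℝ => (S z)⁻¹)
      ((-((S y) ^ 2)⁻¹) • L y) y := fun y =>
    (hasDerivAt_inv (S_pos y).ne').comp_hasFDerivAt y (hasFDerivAt_S y)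
  have hexp : HasFDerivAt (fun y : Fin n → ℝ => Real.exp (y j))
      (Real.exp (x j) • P j) x := (P j).hasFDerivAt.exp
  have hB : HasFDerivAt (fun y : Fin n → ℝ => Real.exp (y j) * (S y)⁻¹)
      (Real.exp (x j) • ((-((S x) ^ 2)⁻¹) • L x)
        + (S x)⁻¹ • (Real.exp (x j) • P j)) x :=
    hexp.mul (hinv x)
  have huniq := hA.unique hB
  rw [iteratedFDeriv_two_apply]
  have heval : fderiv ℝ (fderiv ℝ ψ) x (![Pi.single i 1, Pi.single j 1] 0)
      (![Pi.single i 1, Pi.single j 1] 1)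
      = (A.comp (fderiv ℝ (fderiv ℝ ψ) x)) (Pi.single i 1) := by
    simp [hAdef, ContinuousLinearMap.comp_apply, ContinuousLinearMap.apply_apply]
  rw [heval, huniq]
  simp only [ContinuousLinearMap.add_apply, ContinuousLinearMap.smul_apply, smul_eq_mul,
    L_apply_single, P_apply, Pi.single_apply]
  have hSne : S x ≠ 0 := (S_pos x).ne'
  by_cases hij : i = j
  · subst hij; simp; field_simp; ring
  · have hji : ¬ (j = i) := fun h => hij h.symm
    simp [hij, hji]
    field_simp

lemma det_diag_sub (v : Fin n → ℝ) :
    (Matrix.of fun i j => (if i = j then v i else 0) - v i * v j).det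
      = (∏ i, v i) * (1 - ∑ i, v i) := by
  have hM : (Matrix.of fun i j => (if i = j then v i else 0) - v i * v j)
      = Matrix.diagonal v * (1 + Matrix.replicateCol Unit (fun _ => (-1:ℝ)) * Matrix.replicateRow Unit v) := by
    ext i j
    rw [Matrix.diagonal_mul]
    simp only [Matrix.of_apply, Matrix.add_apply, Matrix.one_apply, Matrix.mul_apply,
      Matrix.replicateCol_apply, Matrix.replicateRow_apply, Finset.univ_unique, Finset.sum_const,
      Finset.card_singleton, one_smul]
    by_cases h : i = j <;> simp [h] <;> ring
  rw [hM, Matrix.det_mul, Matrix.det_diagonal, Matrix.det_one_add_replicateCol_mul_replicateRow]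
  simp only [dotProduct, smul_eq_mul]
  ring_nf
  congr 1
  simp [mul_comm]

lemma sum_exp_holder {m : ℕ} (u w : Fin m → ℝ) {a b : ℝ} (ha : 0 < a) (hb : 0 < b)
    (hab : a + b = 1) :
    ∑ i, Real.exp (a * u i + b * w i)
      ≤ (∑ i, Real.exp (u i)) ^ a * (∑ i, Real.exp (w i)) ^ b := by
  have ha1 : a < 1 := by linarith
  have hpq : Real.HolderConjugate (1/a) (1/b) := by
    rw [Real.holderConjugate_iff]; constructor
    · rw [lt_div_iff₀ ha]; linarith
    · simp only [one_div, inv_inv]; linarith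
  have key := Real.inner_le_Lp_mul_Lq Finset.univ
    (fun i => Real.exp (a * u i)) (fun i => Real.exp (b * w i)) hpq
  have e1 : ∀ i : Fin m, Real.exp (a * u i) * Real.exp (b * w i)
      = Real.exp (a * u i + b * w i) := fun i => (Real.exp_add _ _).symm
  have e2 : ∀ i : Fin m, |Real.exp (a * u i)| ^ (1/a) = Real.exp (u i) := by
    intro i
    rw [abs_of_pos (Real.exp_pos _), mul_comm, Real.exp_mul,
      ← Real.rpow_mul (Real.exp_pos _).le, mul_one_div_cancel ha.ne', Real.rpow_one]
  have e3 : ∀ i : Fin m, |Real.exp (b * w i)| ^ (1/b) = Real.exp (w i) := by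
    intro i
    rw [abs_of_pos (Real.exp_pos _), mul_comm, Real.exp_mul,
      ← Real.rpow_mul (Real.exp_pos _).le, mul_one_div_cancel hb.ne', Real.rpow_one]
  simp only [e1] at key
  calc ∑ i, Real.exp (a * u i + b * w i)
      ≤ (∑ i, |Real.exp (a * u i)| ^ (1/a)) ^ (1/(1/a))
          * (∑ i, |Real.exp (b * w i)| ^ (1/b)) ^ (1/(1/b)) := key
    _ = (∑ i, Real.exp (u i)) ^ a * (∑ i, Real.exp (w i)) ^ b := by
        simp only [one_div_one_div]
        congr 1 <;> [skip; skip] <;> congr 1 <;> exact Finset.sum_congr rfl fun i _ => by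
          first | exact e2 i | exact e3 i

lemma convexOn_psi : ConvexOn ℝ Set.univ (fun x : Fin n → ℝ => Real.log (S x)) := by
  refine ⟨convex_univ, ?_⟩
  intro x _ y _ a b ha hb hab
  rcases eq_or_lt_of_le ha with h0 | ha'
  · have hb1 : b = 1 := by linarith
    simp [← h0, hb1]
  rcases eq_or_lt_of_le hb with h0 | hb'
  · have ha1 : a = 1 := by linarith
    simp [← h0, ha1]
  set x' : Fin (n + 1) → ℝ := Fin.cons 0 x with hx'def
  set y' : Fin (n + 1) → ℝ := Fin.cons 0 y with hy'def
  have hx' : S x = ∑ i : Fin (n+1), Real.exp (x' i) := by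
    rw [Fin.sum_univ_succ]; simp [S, hx'def]
  have hy' : S y = ∑ i : Fin (n+1), Real.exp (y' i) := by
    rw [Fin.sum_univ_succ]; simp [S, hy'def]
  have hz' : S (a • x + b • y) = ∑ i : Fin (n+1),
      Real.exp (a * x' i + b * y' i) := by
    rw [Fin.sum_univ_succ]
    simp [S, hx'def, hy'def, Pi.add_apply, Pi.smul_apply, smul_eq_mul]
  have key : S (a • x + b • y) ≤ (S x) ^ a * (S y) ^ b := by
    rw [hx', hy', hz']
    exact sum_exp_holder _ _ ha' hb' hab
  have h1 : Real.log (S (a • x + b • y)) ≤ Real.log ((S x) ^ a * (S y) ^ b) :=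
    Real.log_le_log (S_pos _) key
  have h2 : Real.log ((S x) ^ a * (S y) ^ b)
      = a * Real.log (S x) + b * Real.log (S y) := by
    rw [Real.log_mul (Real.rpow_pos_of_pos (S_pos x) a).ne'
      (Real.rpow_pos_of_pos (S_pos y) b).ne', Real.log_rpow (S_pos x),
      Real.log_rpow (S_pos y)]
  rw [h2] at h1
  simpa [smul_eq_mul] using h1

end DetHessianAux

open DetHessianAux

/-- Lemma 4.1(a): for `ψ(x) = log(1 + ∑ e^{xᵢ})`, the determinant of the Hessian equals
`exp(-(n+1)ψ(x) + ∑ xⱼ)`; in particular it is positive and log-concave. -/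
theorem det_hessian_log_sum_exp
    (n : ℕ) (hn : 1 ≤ n)
    (ψ : (Fin n → ℝ) → ℝ)
    (hψ : ψ = fun x => Real.log (1 + ∑ i, Real.exp (x i)))
    (H : (Fin n → ℝ) → Matrix (Fin n) (Fin n) ℝ)
    (hH : H = fun x => Matrix.of fun i j =>
      iteratedFDeriv ℝ 2 ψ x ![Pi.single i 1, Pi.single j 1]) :
    (∀ x, (H x).det = Real.exp (-(n + 1 : ℝ) * ψ x + ∑ j, x j)) ∧
    (∀ x, 0 < (H x).det) ∧
    ConcaveOn ℝ Set.univ (fun x => Real.log ((H x).det)) := by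
  have hψS : ψ = fun y : Fin n → ℝ => Real.log (S y) := hψ
  have hHx : ∀ x, H x = Matrix.of fun i j =>
      iteratedFDeriv ℝ 2 ψ x ![Pi.single i 1, Pi.single j 1] := fun x => by rw [hH]
  have hdet : ∀ x, (H x).det
      = Real.exp (-(n + 1 : ℝ) * ψ x + ∑ j, x j) := by
    intro x
    rw [hHx x]
    set v : Fin n → ℝ := fun i => Real.exp (x i) * (S x)⁻¹ with hv
    have hE : (Matrix.of fun i j =>
        iteratedFDeriv ℝ 2 ψ x ![Pi.single i 1, Pi.single j 1])
        = Matrix.of fun i j => (if i = j then v i else 0) - v i * v j := by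
      ext i j
      simp only [Matrix.of_apply]
      rw [hψS]
      exact DetHessianAux.hessian_entry x i j
    rw [hE, det_diag_sub]
    have hSpos := S_pos x
    have hsum : ∑ i, v i = (S x - 1) * (S x)⁻¹ := by
      rw [hv]
      rw [← Finset.sum_mul]
      congr 1
      simp [S]
    have h1 : 1 - ∑ i, v i = (S x)⁻¹ := by
      rw [hsum]; field_simp; ring
    have hprod : ∏ i, v i = Real.exp (∑ j, x j) * ((S x)⁻¹) ^ n := by
      rw [hv, Finset.prod_mul_distrib, Real.exp_sum, Finset.prod_const, Finset.card_univ,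
        Fintype.card_fin]
    rw [h1, hprod]
    simp only [hψS]
    have hrhs : Real.exp (-(n + 1 : ℝ) * Real.log (S x) + ∑ j, x j)
        = Real.exp (∑ j, x j) * ((S x)⁻¹) ^ (n + 1) := by
      rw [Real.exp_add, mul_comm]
      congr 1
      have hcast : (-(n + 1 : ℝ)) * Real.log (S x) = -(((n+1 : ℕ) : ℝ) * Real.log (S x)) := by
        push_cast; ring
      rw [hcast, Real.exp_neg, Real.exp_nat_mul, Real.exp_log hSpos, inv_pow]
    rw [hrhs, pow_succ]
    ring
  refine ⟨hdet, fun x => ?_, ?_⟩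
  · rw [hdet x]; exact Real.exp_pos _
  · have hfun : (fun x => Real.log ((H x).det))
        = fun x => -(((n:ℝ) + 1) * ψ x) + ∑ j, x j := by
      funext x
      rw [hdet x, Real.log_exp]
      ring
    rw [hfun]
    have hconv : ConvexOn ℝ Set.univ ψ := by rw [hψS]; exact convexOn_psi
    have hc1 : ConcaveOn ℝ Set.univ (fun x : Fin n → ℝ => -(((n:ℝ) + 1) • ψ x)) :=
      (hconv.smul (by positivity)).neg
    have hc2 : ConcaveOn ℝ Set.univ (fun x : Fin n → ℝ => ∑ j, x j) := by
      refine ⟨convex_univ, ?_⟩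
      intro x _ y _ a b _ _ _
      apply le_of_eq
      simp [Pi.add_apply, Pi.smul_apply, smul_eq_mul, Finset.mul_sum, Finset.sum_add_distrib]
    exact hc1.add hc2
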